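/- Let $0 < \gamma < 1$, $\rho \in (-1, 1)$, and set $\delta = (1-\gamma)/(1-\gamma+\rho^2\gamma)$. Let $\lambda, c, d : \mathbb{R} \to \mathbb{R}$ be given functions. Let $f : \mathbb{R} \times \mathbb{R} \to \mathbb{R}$, and suppose at the point $(t, y)$ the partial derivatives $f_t = \partial_t f$, $f_y = \partial_y f$, $f_{yy} = \partial^2_{yy} f$ exist, $f(t,y) > 0$, and $f$ satisfies the linear parabolic equation $f_t + \tfrac{1}{2} d(y)^2 f_{yy} + \big( c(y) + \frac{\rho\gamma\lambda(y) d(y)}{1-\gamma} \big) f_y + \frac{\gamma\, \lambda(y)^2}{2\delta(1-\gamma)}\, f(t,y) = 0$ at $(t,y)$. Define $v(t,x,y) = \frac{x^\gamma}{\gamma} f(t,y)^\delta$. Then for every $x > 0$, $v$ satisfies the fully nonlinear Hamilton–Jacobi–Bellman equation $\partial_t v + \tfrac{1}{2} d(y)^2\, \partial^2_{yy} v + c(y)\, \partial_y v - \frac{\big(\lambda(y)\, \partial_x v + \rho\, d(y)\, \partial_x \partial_y v\big)^2}{2\, \partial^2_{xx} v} = 0$ at $(t,x,y)$, and $\partial^2_{xx}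 v(t,x,y) \ne 0$ so the quotient is well defined. -/

import Mathlib

/-- **Verification step of the finance example (Section 4 of the paper).**
Let `0 < γ < 1`, `ρ ∈ (-1,1)`, `δ = (1-γ)/(1-γ+ρ²γ)`, and suppose `f(t,y) > 0`,
the partial derivatives `f_t, f_y, f_yy` of `f` exist at `(t,y)`, and `f`
satisfies the linear parabolic equation
`f_t + ½ d(y)² f_yy + (c(y) + ργλ(y)d(y)/(1-γ)) f_y + γλ(y)² f/(2δ(1-γ)) = 0`
at `(t,y)`.  Then for every `x > 0` the function `v(t,x,y) = (x^γ/γ) f(t,y)^δ`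
satisfies the fully nonlinear Hamilton–Jacobi–Bellman equation
`v_t + ½ d(y)² v_yy + c(y) v_y - (λ(y) v_x + ρ d(y) v_xy)²/(2 v_xx) = 0`
at `(t,x,y)`, with `v_xx ≠ 0` so the quotient is well defined. -/
theorem hjb_verification (γ ρ δ : ℝ) (hγ0 : 0 < γ) (hγ1 : γ < 1)
    (hρl : -1 < ρ) (hρr : ρ < 1)
    (hδ : δ = (1 - γ) / (1 - γ + ρ ^ 2 * γ))
    (lam c d : ℝ → ℝ) (f : ℝ → ℝ → ℝ) (t y : ℝ) (ft fy fyy : ℝ)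
    (hft : HasDerivAt (fun s => f s y) ft t)
    (hfy : HasDerivAt (fun z => f t z) fy y)
    (hfyy : HasDerivAt (fun z => deriv (fun w => f t w) z) fyy y)
    (hf0 : 0 < f t y)
    (hpde : ft + 1 / 2 * (d y) ^ 2 * fyy
        + (c y + ρ * γ * lam y * d y / (1 - γ)) * fy
        + γ * (lam y) ^ 2 / (2 * δ * (1 - γ)) * f t y = 0)
    (v : ℝ → ℝ → ℝ → ℝ)
    (hv : v = fun s x z => x ^ γ / γ * (f s z) ^ δ) :
    ∀ x : ℝ, 0 < x →
      ∃ vt vy vyy vx vxy vxx : ℝ,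
        HasDerivAt (fun s => v s x y) vt t ∧
        HasDerivAt (fun z => v t x z) vy y ∧
        HasDerivAt (fun z => deriv (fun w => v t x w) z) vyy y ∧
        HasDerivAt (fun w => v t w y) vx x ∧
        HasDerivAt (fun w => deriv (fun z => v t w z) y) vxy x ∧
        HasDerivAt (fun w => deriv (fun w' => v t w' y) w) vxx x ∧
        vxx ≠ 0 ∧
        vt + 1 / 2 * (d y) ^ 2 * vyy + c y * vy
            - (lam y * vx + ρ * d y * vxy) ^ 2 / (2 * vxx) = 0 := by
  intro x hx
  subst hv
  have hγne : γ ≠ 0 := ne_of_gt hγ0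
  have h1γ : (0:ℝ) < 1 - γ := by linarith
  have h1γne : (1:ℝ) - γ ≠ 0 := ne_of_gt h1γ
  have hγ1ne : γ - 1 ≠ 0 := by intro h; apply h1γne; linarith
  have hF0 : 0 < f t y := hf0
  have hFne : f t y ≠ 0 := ne_of_gt hF0
  have hxne : x ≠ 0 := ne_of_gt hx
  have hD : (0:ℝ) < 1 - γ + ρ ^ 2 * γ := by nlinarith [sq_nonneg ρ]
  have hδ0 : (0:ℝ) < δ := by rw [hδ]; positivity
  have hδne : δ ≠ 0 := ne_of_gt hδ0
  have hδ' : δ * (1 - γ + ρ ^ 2 * γ) = 1 - γ := by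
    rw [hδ]; field_simp
  -- basic derivative of z ↦ f t z ^ δ at y
  have hfδ : HasDerivAt (fun z => f t z ^ δ) (fy * δ * f t y ^ (δ - 1)) y :=
    hfy.rpow_const (Or.inl hFne)
  have hftδ : HasDerivAt (fun s => f s y ^ δ) (ft * δ * f t y ^ (δ - 1)) t :=
    hft.rpow_const (Or.inl hFne)
  -- v_t
  have hvt : HasDerivAt (fun s => x ^ γ / γ * f s y ^ δ)
      (x ^ γ / γ * (ft * δ * f t y ^ (δ - 1))) t := hftδ.const_mul _
  -- v_y
  have hvy : HasDerivAt (fun z => x ^ γ / γ * f t z ^ δ)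
      (x ^ γ / γ * (fy * δ * f t y ^ (δ - 1))) y := hfδ.const_mul _
  -- v_x
  have hvx : HasDerivAt (fun w : ℝ => w ^ γ / γ * f t y ^ δ)
      (γ * x ^ (γ - 1) / γ * f t y ^ δ) x :=
    ((Real.hasDerivAt_rpow_const (Or.inl hxne)).div_const γ).mul_const _
  -- v_xy
  have hvxy : HasDerivAt (fun w : ℝ => deriv (fun z => w ^ γ / γ * f t z ^ δ) y)
      (γ * x ^ (γ - 1) / γ * (fy * δ * f t y ^ (δ - 1))) x := by
    have hrw : (fun w : ℝ => deriv (fun z => w ^ γ / γ * f t z ^ δ) y)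
        = fun w : ℝ => w ^ γ / γ * (fy * δ * f t y ^ (δ - 1)) := by
      funext w
      rw [deriv_const_mul_field, hfδ.deriv]
    rw [hrw]
    exact ((Real.hasDerivAt_rpow_const (Or.inl hxne)).div_const γ).mul_const _
  -- v_xx
  have hvxx : HasDerivAt (fun w : ℝ => deriv (fun w' : ℝ => w' ^ γ / γ * f t y ^ δ) w)
      ((γ - 1) * x ^ (γ - 1 - 1) * f t y ^ δ) x := by
    have hmodel : HasDerivAt (fun w : ℝ => w ^ (γ - 1) * f t y ^ δ)
        ((γ - 1) * x ^ (γ - 1 - 1) * f t y ^ δ) x :=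
      (Real.hasDerivAt_rpow_const (Or.inl hxne)).mul_const _
    apply hmodel.congr_of_eventuallyEq
    filter_upwards [eventually_gt_nhds hx] with w hw
    rw [(((Real.hasDerivAt_rpow_const (Or.inl hw.ne')).div_const γ).mul_const
      (f t y ^ δ)).deriv]
    field_simp
  -- v_yy
  have hvyy : HasDerivAt (fun z => deriv (fun w => x ^ γ / γ * f t w ^ δ) z)
      (x ^ γ / γ * δ * (fy * (δ - 1) * f t y ^ (δ - 1 - 1) * fy + f t y ^ (δ - 1) * fyy)) y := by
    -- positivity neighborhood
    have hU : (fun z => f t z) ⁻¹' Set.Ioi 0 ∈ nhds y :=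
      hfy.continuousAt.preimage_mem_nhds (isOpen_Ioi.mem_nhds hF0)
    rcases mem_nhds_iff.mp hU with ⟨V, hVsub, hVopen, hyV⟩
    have hkey : ∀ z ∈ V, deriv (fun w => f t w ^ δ) z
        = δ * f t z ^ (δ - 1) * deriv (fun w => f t w) z := by
      intro z hz
      have hz0 : 0 < f t z := hVsub hz
      by_cases hdiff : DifferentiableAt ℝ (fun w => f t w) z
      · rw [(hdiff.hasDerivAt.rpow_const (Or.inl hz0.ne')).deriv]
        ring
      · have hnd2 : ¬ DifferentiableAt ℝ (fun w => f t w ^ δ) z := by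
          intro hd2
          apply hdiff
          have heq : (fun w => (f t w ^ δ) ^ δ⁻¹) =ᶠ[nhds z] fun w => f t w := by
            filter_upwards [hVopen.mem_nhds hz] with w hw
            have hw0 : 0 < f t w := hVsub hw
            rw [← Real.rpow_mul hw0.le, mul_inv_cancel₀ hδne, Real.rpow_one]
          exact (hd2.rpow_const (Or.inl (Real.rpow_pos_of_pos hz0 δ).ne')).congr_of_eventuallyEq
            heq.symm
        rw [deriv_zero_of_not_differentiableAt hdiff,
          deriv_zero_of_not_differentiableAt hnd2]
        ring
    have hev : (fun z => deriv (fun w => x ^ γ / γ * f t w ^ δ) z)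
        =ᶠ[nhds y] fun z => x ^ γ / γ * δ
          * (f t z ^ (δ - 1) * deriv (fun w => f t w) z) := by
      filter_upwards [hVopen.mem_nhds hyV] with z hz
      rw [deriv_const_mul_field, hkey z hz]
      ring
    have h1 : HasDerivAt (fun z => f t z ^ (δ - 1))
        (fy * (δ - 1) * f t y ^ (δ - 1 - 1)) y := hfy.rpow_const (Or.inl hFne)
    have hprod := h1.mul hfyy
    rw [hfy.deriv] at hprod
    exact (hprod.const_mul (x ^ γ / γ * δ)).congr_of_eventuallyEq hev
  have hxp : (0:ℝ) < x ^ γ := Real.rpow_pos_of_pos hx γ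
  have hbp : (0:ℝ) < f t y ^ δ := Real.rpow_pos_of_pos hF0 δ
  have hx12 : (0:ℝ) < x ^ (γ - 1 - 1) := Real.rpow_pos_of_pos hx _
  refine ⟨_, _, _, _, _, _, hvt, hvy, hvyy, hvx, hvxy, hvxx, ?_, ?_⟩
  · exact mul_ne_zero (mul_ne_zero hγ1ne hx12.ne') hbp.ne'
  · have hx1 : x ^ (γ - 1) = x ^ γ / x := by
      rw [Real.rpow_sub hx, Real.rpow_one]
    have hx2 : x ^ (γ - 1 - 1) = x ^ γ / x / x := by
      rw [Real.rpow_sub hx, Real.rpow_sub hx, Real.rpow_one]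
    have hF1 : f t y ^ (δ - 1) = f t y ^ δ / f t y := by
      rw [Real.rpow_sub hF0, Real.rpow_one]
    have hF2 : f t y ^ (δ - 1 - 1) = f t y ^ δ / f t y / f t y := by
      rw [Real.rpow_sub hF0, Real.rpow_sub hF0, Real.rpow_one]
    have hpde' : 2 * δ * (1 - γ) * ft + δ * (1 - γ) * (d y) ^ 2 * fyy
        + 2 * δ * (1 - γ) * (c y) * fy + 2 * δ * ρ * γ * (lam y) * (d y) * fy
        + γ * (lam y) ^ 2 * f t y = 0 := by
      have hpde2 : (2 * (1 - γ)) * (2 * δ * (1 - γ) * ft + δ * (1 - γ) * (d y) ^ 2 * fyy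
          + 2 * δ * (1 - γ) * (c y) * fy + 2 * δ * ρ * γ * (lam y) * (d y) * fy
          + γ * (lam y) ^ 2 * f t y) = 0 := by
        field_simp at hpde
        linear_combination (2 * (1 - γ)) * hpde
      rcases mul_eq_zero.mp hpde2 with h | h
      · exact absurd h (by positivity)
      · exact h
    have key : 2 * (γ - 1) * δ * f t y * ft
        + (γ - 1) * δ * (d y) ^ 2 * ((δ - 1) * fy ^ 2 + f t y * fyy)
        + 2 * (γ - 1) * (c y) * δ * f t y * fy
        - γ * (lam y * f t y + ρ * d y * δ * fy) ^ 2 = 0 := by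
      linear_combination (-(f t y)) * hpde' + (-(δ * (d y) ^ 2 * fy ^ 2)) * hδ'
    rw [hx1, hx2, hF1, hF2]
    have h2v : 2 * ((γ - 1) * (x ^ γ / x / x) * f t y ^ δ) ≠ 0 := by
      apply mul_ne_zero two_ne_zero
      exact mul_ne_zero (mul_ne_zero hγ1ne (show x ^ γ / x / x ≠ 0 by positivity)) hbp.ne'
    rw [sub_eq_zero, eq_div_iff h2v]
    field_simp
    linear_combination key
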